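/- arXiv:1209.3417 — 3 statements merged into one kernel-verified Lean document; each statement's English description precedes it below -/
import Mathlib

section
/- Let R be a commutative Noetherian ring and M an R-module. Then Att_R(M) = Att_R(M^∨∨), where (-)^∨ = Hom_R(-, ⊕_{m ∈ Max R} E(R/m)). -/
open CategoryTheory

universe u

/-- The set of attached primes of `M`: primes `p` with `p = Ann_R(L)` for some quotient `L` of `M`. -/
def Module.Att (R : Type u) [CommRing R] (M : Type u) [AddCommGroup M] [Module R M] :
    Set (Ideal R) :=
  {p | p.IsPrime ∧ ∃ N : Submodule R M, p = Module.annihilator R (M ⧸ N)}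

/-- `IsInjectiveHull R A E f` says that `f : A →ₗ[R] E` realizes `E` as an injective hull of `A`:
`f` is injective, `E` is an injective `R`-module, and the image of `f` is an essential
submodule of `E`. -/
def IsInjectiveHull (R : Type u) [CommRing R] (A : Type u) (E : Type u) [AddCommGroup A]
    [Module R A] [AddCommGroup E] [Module R E] (f : A →ₗ[R] E) : Prop :=
  Function.Injective f ∧ Module.Injective R E ∧
    ∀ N : Submodule R E, N ≠ ⊥ → N ⊓ LinearMap.range f ≠ ⊥

section Auxiliary

variable {R : Type u} [CommRing R]

/-- Factorization through an injective module: a map vanishing on the kernel of `α`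
factors through `α`. -/
lemma extend_of_ker_le {Q X Y : Type u} [AddCommGroup Q] [Module R Q]
    [AddCommGroup X] [Module R X] [AddCommGroup Y] [Module R Y]
    (hQ : Module.Injective R Q) (α : X →ₗ[R] Y) (f : X →ₗ[R] Q)
    (h : LinearMap.ker α ≤ LinearMap.ker f) : ∃ g : Y →ₗ[R] Q, ∀ x, g (α x) = f x := by
  set f' : (X ⧸ LinearMap.ker α) →ₗ[R] Q := (LinearMap.ker α).liftQ f h with hf'
  set f'' : LinearMap.range α →ₗ[R] Q := f' ∘ₗ (α.quotKerEquivRange.symm.toLinearMap) with hf''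
  obtain ⟨g, hg⟩ := hQ.out (LinearMap.range α).subtype (Submodule.injective_subtype _) f''
  refine ⟨g, fun x => ?_⟩
  have h1 : g (α x) = f'' ⟨α x, LinearMap.mem_range_self α x⟩ :=
    hg ⟨α x, LinearMap.mem_range_self α x⟩
  rw [h1, hf'', LinearMap.comp_apply]
  have h2 : α.quotKerEquivRange.symm.toLinearMap ⟨α x, LinearMap.mem_range_self α x⟩
      = Submodule.Quotient.mk x := by
    rw [LinearEquiv.coe_coe, LinearEquiv.symm_apply_eq]
    exact Subtype.ext (α.quotKerEquivRange_apply_mk x)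
  rw [h2, hf', Submodule.liftQ_apply]

variable (E : MaximalSpectrum R → Type u) [∀ m, AddCommGroup (E m)] [∀ m, Module R (E m)]

/-- The direct sum `⊕ E(R/m)` is a cogenerator: any nonzero element of any module admits a
functional (valued in the direct sum) which does not kill it. -/
lemma exists_apply_ne_zero
    (e : ∀ m : MaximalSpectrum R, (R ⧸ m.asIdeal) →ₗ[R] E m)
    (he : ∀ m : MaximalSpectrum R, IsInjectiveHull R (R ⧸ m.asIdeal) (E m) (e m))
    {X : Type u} [AddCommGroup X] [Module R X] {x : X}
    (hx : x ≠ 0) : ∃ f : X →ₗ[R] DirectSum (MaximalSpectrum R) E, f x ≠ 0 := by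
  classical
  set α := LinearMap.toSpanSingleton R X x with hα
  have hne : LinearMap.ker α ≠ ⊤ := by
    intro h
    have : α 1 = 0 := by
      have : (1 : R) ∈ LinearMap.ker α := h ▸ Submodule.mem_top
      simpa using this
    simp [hα, LinearMap.toSpanSingleton_apply] at this
    exact hx this
  obtain ⟨m', hm', hle⟩ := Ideal.exists_le_maximal _ hne
  set m : MaximalSpectrum R := ⟨m', hm'⟩ with hm
  set q : R →ₗ[R] E m := (e m) ∘ₗ m'.mkQ with hq
  have hker : LinearMap.ker α ≤ LinearMap.ker q := by
    intro c hc
    have : c ∈ m' := hle hc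
    simp only [hq, LinearMap.mem_ker, LinearMap.comp_apply]
    have : m'.mkQ c = 0 := (Submodule.Quotient.mk_eq_zero _).2 this
    rw [this, map_zero]
  obtain ⟨g, hg⟩ := extend_of_ker_le (he m).2.1 α q hker
  refine ⟨(DirectSum.lof R _ E m) ∘ₗ g, ?_⟩
  have hgx : g x = q 1 := by
    have := hg 1
    simpa [hα, LinearMap.toSpanSingleton_apply] using this
  have hq1 : q 1 ≠ 0 := by
    intro h0
    have h1 : m'.mkQ 1 = 0 → False := by
      intro hh
      exact hm'.ne_top ((Ideal.eq_top_iff_one _).2 ((Submodule.Quotient.mk_eq_zero _).1 hh))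
    have := (he m).1
    apply h1
    apply this
    simpa [hq] using h0
  intro h0
  apply hq1
  rw [← hgx]
  have : (DirectSum.lof R _ E m) (g x) = 0 := h0
  have := DFunLike.congr_fun this m
  rwa [DirectSum.lof_eq_of, DirectSum.of_eq_same, DirectSum.zero_apply] at this

/-- Bass–Papp, easy direction: over a Noetherian ring a direct sum of injective modules
is injective. -/
lemma directSum_injective [IsNoetherianRing R]
    (hE : ∀ m, Module.Injective R (E m)) :
    Module.Injective R (DirectSum (MaximalSpectrum R) E) := by
  classical
  apply Module.Baer.injective
  intro I g
  obtain ⟨S, hS⟩ : I.FG := IsNoetherian.noetherian I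
  set T := DirectSum (MaximalSpectrum R) E with hT
  set Sfin : Finset (MaximalSpectrum R) :=
    S.attach.biUnion (fun s => (g ⟨s.1, hS ▸ Submodule.subset_span s.2⟩).support) with hSfin
  set V : Submodule R T :=
    { carrier := {t | ∀ m ∉ Sfin, t m = 0}
      add_mem' := by
        intro a b ha hb m hm
        rw [DirectSum.add_apply, ha m hm, hb m hm, add_zero]
      zero_mem' := by intro m hm; rfl
      smul_mem' := by
        intro c a ha m hm
        rw [DirectSum.smul_apply, ha m hm, smul_zero] } with hV
  have hsupp : ∀ y : I, g y ∈ V := by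
    rintro ⟨y, hy⟩
    have key : ∀ z, ∀ hz : z ∈ Ideal.span (S : Set R), g ⟨z, hS ▸ hz⟩ ∈ V := by
      intro z hz
      induction hz using Submodule.span_induction with
      | mem z hzS =>
        intro m hm
        by_contra hne
        exact hm (Finset.mem_biUnion.2
          ⟨⟨z, hzS⟩, Finset.mem_attach _ _, DFinsupp.mem_support_iff.2 hne⟩)
      | zero =>
        have : (⟨(0:R), hS ▸ (Ideal.span (S : Set R)).zero_mem⟩ : I) = 0 := rfl
        rw [this, map_zero]; exact V.zero_mem
      | add a b ha hb iha ihb =>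
        have : (⟨a + b, hS ▸ Submodule.add_mem _ ha hb⟩ : I)
            = ⟨a, hS ▸ ha⟩ + ⟨b, hS ▸ hb⟩ := rfl
        rw [this, map_add]; exact V.add_mem iha ihb
      | smul c a ha iha =>
        have : (⟨c • a, hS ▸ Submodule.smul_mem _ c ha⟩ : I) = c • ⟨a, hS ▸ ha⟩ := rfl
        rw [this, map_smul]; exact V.smul_mem c iha
    have hz : y ∈ Ideal.span (S : Set R) := hS ▸ hy
    have := key y hz
    convert this using 2
  have hext : ∀ m, ∃ h : R →ₗ[R] E m, ∀ y : I,
      h y = (DirectSum.component R _ E m) (g y) := by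
    intro m
    obtain ⟨h, hh⟩ := (hE m).out I.subtype (Submodule.injective_subtype I)
      ((DirectSum.component R _ E m) ∘ₗ g)
    exact ⟨h, fun y => hh y⟩
  choose h hh using hext
  refine ⟨∑ m ∈ Sfin, (DirectSum.lof R _ E m) ∘ₗ (h m), fun x hx => ?_⟩
  apply DFinsupp.ext
  intro m0
  rw [LinearMap.sum_apply]
  rw [DFinsupp.finset_sum_apply]
  by_cases hmem : m0 ∈ Sfin
  · rw [Finset.sum_eq_single_of_mem m0 hmem]
    · rw [LinearMap.comp_apply, DirectSum.lof_eq_of, DirectSum.of_eq_same]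
      have := hh m0 ⟨x, hx⟩
      exact this
    · intro m hm hne
      rw [LinearMap.comp_apply, DirectSum.lof_eq_of, DirectSum.of_eq_of_ne _ _ _ hne.symm]
  · rw [Finset.sum_eq_zero fun m hm => by
      rw [LinearMap.comp_apply, DirectSum.lof_eq_of,
        DirectSum.of_eq_of_ne _ _ _ (by rintro rfl; exact hmem hm)]]
    exact (hsupp ⟨x, hx⟩ m0 hmem).symm

/-- Membership in the annihilator of a quotient. -/
lemma mem_ann_quot {Y : Type u} [AddCommGroup Y] [Module R Y] (N : Submodule R Y) (r : R) :
    r ∈ Module.annihilator R (Y ⧸ N) ↔ ∀ y : Y, r • y ∈ N := by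
  rw [Module.mem_annihilator]
  constructor
  · intro h y
    have := h (Submodule.Quotient.mk y)
    rwa [← Submodule.Quotient.mk_smul, Submodule.Quotient.mk_eq_zero] at this
  · intro h z
    obtain ⟨y, rfl⟩ := Submodule.Quotient.mk_surjective N z
    rw [← Submodule.Quotient.mk_smul, Submodule.Quotient.mk_eq_zero]
    exact h y

/-- The key computation: the annihilator of `X^∨∨/pX^∨∨` equals that of `X/pX`. -/
lemma ann_double_dual_quot [IsNoetherianRing R]
    (hTinj : Module.Injective R (DirectSum (MaximalSpectrum R) E))
    (hco : ∀ {X : Type u} [AddCommGroup X] [Module R X] (x : X),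
      x ≠ 0 → ∃ f : X →ₗ[R] DirectSum (MaximalSpectrum R) E, f x ≠ 0)
    (X : Type u) [AddCommGroup X] [Module R X] (p : Ideal R) :
    Module.annihilator R
      (((X →ₗ[R] DirectSum (MaximalSpectrum R) E) →ₗ[R] DirectSum (MaximalSpectrum R) E)
        ⧸ (p • ⊤ : Submodule R ((X →ₗ[R] DirectSum (MaximalSpectrum R) E) →ₗ[R]
            DirectSum (MaximalSpectrum R) E)))
    = Module.annihilator R (X ⧸ (p • ⊤ : Submodule R X)) := by
  classical
  set T := DirectSum (MaximalSpectrum R) E with hT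
  set K := X →ₗ[R] T with hK
  ext r
  rw [mem_ann_quot, mem_ann_quot]
  constructor
  · intro H x
    by_contra hx
    have hmk : (Submodule.Quotient.mk (r • x) : X ⧸ (p • ⊤ : Submodule R X)) ≠ 0 := by
      rwa [ne_eq, Submodule.Quotient.mk_eq_zero]
    obtain ⟨gb, hgb⟩ := hco _ hmk
    set f : K := gb ∘ₗ (p • ⊤ : Submodule R X).mkQ with hf
    have hkill : ∀ h ∈ (p • (⊤ : Submodule R (K →ₗ[R] T))), h f = 0 := by
      intro h hh
      refine Submodule.smul_induction_on hh (fun a ha Ψ _ => ?_) (fun u v hu hv => by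
        rw [LinearMap.add_apply, hu, hv, add_zero])
      have haf : a • f = 0 := by
        ext y : 1
        show a • f y = 0
        rw [hf]
        show a • gb ((p • ⊤ : Submodule R X).mkQ y) = 0
        rw [← map_smul, ← map_smul, Submodule.mkQ_apply]
        have : (Submodule.Quotient.mk (a • y) : X ⧸ (p • ⊤ : Submodule R X)) = 0 :=
          (Submodule.Quotient.mk_eq_zero _).2 (Submodule.smul_mem_smul ha Submodule.mem_top)
        rw [this, map_zero]
      rw [LinearMap.smul_apply, ← map_smul, haf, map_zero]
    have hrf : r • f ≠ 0 := by
      intro h0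
      apply hgb
      have := DFunLike.congr_fun h0 x
      rw [LinearMap.smul_apply, LinearMap.zero_apply, hf] at this
      rw [← map_smul] at this
      simpa using this
    obtain ⟨Φ, hΦ⟩ := hco _ hrf
    have := hkill _ (H Φ)
    rw [LinearMap.smul_apply, ← map_smul] at this
    exact hΦ this
  · intro H Φ
    obtain ⟨S, hS⟩ : p.FG := IsNoetherian.noetherian p
    set α : K →ₗ[R] (↥S → K) := LinearMap.pi (fun s => (s.1 : R) • LinearMap.id) with hα
    have hker : LinearMap.ker α ≤ LinearMap.ker (r • Φ) := by
      intro f hfk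
      have hαf : ∀ s : ↥S, (s.1 : R) • f = 0 := by
        intro s
        have h0 : α f = 0 := LinearMap.mem_ker.1 hfk
        have := congr_fun h0 s
        simpa [hα] using this
      have hpf : ∀ a ∈ p, a • f = 0 := by
        intro a ha
        have hsub : p ≤ LinearMap.ker (LinearMap.toSpanSingleton R K f) := by
          rw [← hS, Ideal.span_le]
          intro s hs
          simpa [LinearMap.toSpanSingleton_apply] using hαf ⟨s, hs⟩
        simpa [LinearMap.toSpanSingleton_apply] using hsub ha
      have hrf : r • f = 0 := by
        ext y : 1
        rw [LinearMap.smul_apply, ← map_smul, LinearMap.zero_apply]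
        refine Submodule.smul_induction_on (H y) (fun a ha z _ => ?_) (fun u v hu hv => by
          rw [map_add, hu, hv, add_zero])
        rw [map_smul, ← LinearMap.smul_apply, hpf a ha, LinearMap.zero_apply]
      rw [LinearMap.mem_ker, LinearMap.smul_apply, ← map_smul, hrf, map_zero]
    obtain ⟨g, hg⟩ := extend_of_ker_le hTinj α (r • Φ) hker
    have key : r • Φ
        = ∑ s ∈ S.attach, (s.1 : R) • (g ∘ₗ LinearMap.single R (fun _ : ↥S => K) s) := by
      ext f : 1
      rw [← hg f]
      have hαf : α f = ∑ s : ↥S, Pi.single s ((s.1 : R) • f) := by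
        conv_lhs => rw [← Finset.univ_sum_single (α f)]
        refine Finset.sum_congr rfl (fun t _ => ?_)
        have ht : α f t = (t.1 : R) • f := by simp [hα]
        rw [ht]
      rw [hαf, map_sum, LinearMap.sum_apply, Finset.univ_eq_attach]
      refine Finset.sum_congr rfl (fun s _ => ?_)
      rw [LinearMap.smul_apply, LinearMap.comp_apply, ← map_smul]
      congr 1
      show Pi.single s ((s.1:R) • f) = (s.1:R) • (Pi.single s f : ↥S → K)
      rw [Pi.single_smul]
    rw [key]
    refine Submodule.sum_mem _ (fun s _ => ?_)
    exact Submodule.smul_mem_smul (hS ▸ Ideal.subset_span s.2) Submodule.mem_top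

/-- A prime is attached iff it is the annihilator of `X/pX`. -/
lemma mem_att_iff {X : Type u} [AddCommGroup X] [Module R X] (p : Ideal R) :
    p ∈ Module.Att R X ↔
      p.IsPrime ∧ Module.annihilator R (X ⧸ (p • ⊤ : Submodule R X)) = p := by
  constructor
  · rintro ⟨hp, N, hN⟩
    refine ⟨hp, le_antisymm ?_ ?_⟩
    · intro r hr
      rw [mem_ann_quot] at hr
      have hle : (p • ⊤ : Submodule R X) ≤ N := by
        rw [Submodule.smul_le]
        intro a ha x _
        have : a ∈ Module.annihilator R (X ⧸ N) := hN ▸ ha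
        exact (mem_ann_quot N a).1 this x
      have : r ∈ Module.annihilator R (X ⧸ N) :=
        (mem_ann_quot N r).2 (fun y => hle (hr y))
      exact hN ▸ this
    · intro a ha
      rw [mem_ann_quot]
      exact fun y => Submodule.smul_mem_smul ha Submodule.mem_top
  · rintro ⟨hp, h⟩
    exact ⟨hp, p • ⊤, h.symm⟩

end Auxiliary

theorem att_eq_att_double_dual (R : Type u) [CommRing R] [IsNoetherianRing R]
    (E : MaximalSpectrum R → Type u) [∀ m, AddCommGroup (E m)] [∀ m, Module R (E m)]
    (e : ∀ m : MaximalSpectrum R, (R ⧸ m.asIdeal) →ₗ[R] E m)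
    (he : ∀ m : MaximalSpectrum R, IsInjectiveHull R (R ⧸ m.asIdeal) (E m) (e m))
    (M : Type u) [AddCommGroup M] [Module R M] :
    Module.Att R M = Module.Att R ((M →ₗ[R] DirectSum (MaximalSpectrum R) E) →ₗ[R] DirectSum (MaximalSpectrum R) E) := by
  have hTinj : Module.Injective R (DirectSum (MaximalSpectrum R) E) :=
    directSum_injective E (fun m => (he m).2.1)
  ext p
  rw [mem_att_iff, mem_att_iff,
    ann_double_dual_quot E hTinj (fun {X} _ _ x hx => exists_apply_ne_zero E e he hx) M p]
end

section
/- Let (R, m) be a Noetherian local ring, p a non-maximal prime ideal, and M = R/p. Then Coass_R(M) = {m} while Att_R(M) = V(p); in particular, the inclusion Coass_R(M) ⊆ Att_R(M) is strict. -/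
open CategoryTheory

universe u

/-- The set of coassociated primes of `M`: primes `p` with `p = Ann_R(L)` for some Artinian
quotient `L` of `M`. -/
def Module.Coass (R : Type u) [CommRing R] (M : Type u) [AddCommGroup M] [Module R M] :
    Set (Ideal R) :=
  {p | p.IsPrime ∧ ∃ N : Submodule R M, IsArtinian R (M ⧸ N) ∧ p = Module.annihilator R (M ⧸ N)}

section Aux

variable {R : Type u} [CommRing R] (p : Ideal R)

/-- The composite `R → R⧸p → (R⧸p)⧸N` as a linear map. -/
noncomputable def auxPhi (N : Submodule R (R ⧸ p)) : R →ₗ[R] (R ⧸ p) ⧸ N :=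
  N.mkQ.comp (Algebra.linearMap R (R ⧸ p))

lemma auxPhi_surjective (N : Submodule R (R ⧸ p)) : Function.Surjective (auxPhi p N) := by
  intro x
  obtain ⟨y, rfl⟩ := Submodule.Quotient.mk_surjective N x
  obtain ⟨r, rfl⟩ := Ideal.Quotient.mk_surjective y
  exact ⟨r, rfl⟩

lemma auxPhi_ker (N : Submodule R (R ⧸ p)) :
    LinearMap.ker (auxPhi p N) = N.comap (Algebra.linearMap R (R ⧸ p)) := by
  ext r
  simp [auxPhi, Submodule.Quotient.mk_eq_zero]

lemma ann_eq (N : Submodule R (R ⧸ p)) :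
    Module.annihilator R ((R ⧸ p) ⧸ N) = N.comap (Algebra.linearMap R (R ⧸ p)) := by
  ext r
  rw [Module.mem_annihilator]
  constructor
  · intro h
    have := h (Submodule.Quotient.mk (Ideal.Quotient.mk p 1))
    rw [← Submodule.Quotient.mk_smul, Submodule.Quotient.mk_eq_zero] at this
    have e : (r • Ideal.Quotient.mk p 1) = Ideal.Quotient.mk p r := by
      simp [Algebra.smul_def]
    rwa [e] at this
  · intro h x
    obtain ⟨y, rfl⟩ := Submodule.Quotient.mk_surjective N x
    obtain ⟨s, rfl⟩ := Ideal.Quotient.mk_surjective y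
    rw [← Submodule.Quotient.mk_smul, Submodule.Quotient.mk_eq_zero]
    have hmem : Ideal.Quotient.mk p r ∈ N := h
    have : r • Ideal.Quotient.mk p s = s • Ideal.Quotient.mk p r := by
      simp [Algebra.smul_def, mul_comm]
    rw [this]
    exact N.smul_mem s hmem

/-- The quotient `(R⧸p)⧸N` is isomorphic to `R ⧸ I` where `I` is the preimage of `N`. -/
noncomputable def auxEquiv (N : Submodule R (R ⧸ p)) :
    (R ⧸ (N.comap (Algebra.linearMap R (R ⧸ p)) : Ideal R)) ≃ₗ[R] ((R ⧸ p) ⧸ N) :=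
  (auxPhi_ker p N ▸ (auxPhi p N).quotKerEquivOfSurjective (auxPhi_surjective p N))

lemma comap_map_eq {q : Ideal R} (hpq : p ≤ q) :
    (Submodule.restrictScalars R (q.map (Ideal.Quotient.mk p))).comap
      (Algebra.linearMap R (R ⧸ p)) = q := by
  ext r
  simpa using Ideal.mem_quotient_iff_mem hpq (x := r)

end Aux

theorem coass_att_quotient_prime (R : Type u) [CommRing R] [IsNoetherianRing R]
    [IsLocalRing R] (p : Ideal R) (hp : p.IsPrime)
    (hpm : p ≠ IsLocalRing.maximalIdeal R) :
    Module.Coass R (R ⧸ p) = {IsLocalRing.maximalIdeal R} ∧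
      Module.Att R (R ⧸ p) = {q : Ideal R | q.IsPrime ∧ p ≤ q} ∧
      Module.Coass R (R ⧸ p) ⊂ Module.Att R (R ⧸ p) := by
  have hm : (IsLocalRing.maximalIdeal R).IsMaximal := IsLocalRing.maximalIdeal.isMaximal R
  have hAtt : Module.Att R (R ⧸ p) = {q : Ideal R | q.IsPrime ∧ p ≤ q} := by
    ext q
    constructor
    · rintro ⟨hq, N, rfl⟩
      refine ⟨hq, ?_⟩
      rw [ann_eq]
      intro r hr
      show Ideal.Quotient.mk p r ∈ N
      have : Ideal.Quotient.mk p r = 0 := Ideal.Quotient.eq_zero_iff_mem.mpr hr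
      rw [this]; exact N.zero_mem
    · rintro ⟨hq, hpq⟩
      refine ⟨hq, Submodule.restrictScalars R (q.map (Ideal.Quotient.mk p)), ?_⟩
      rw [ann_eq, comap_map_eq p hpq]
  have hCoass : Module.Coass R (R ⧸ p) = {IsLocalRing.maximalIdeal R} := by
    ext q
    constructor
    · rintro ⟨hq, N, hart, rfl⟩
      rw [ann_eq]
      rw [ann_eq] at hq
      set I : Ideal R := N.comap (Algebra.linearMap R (R ⧸ p)) with hI
      have h1 : IsArtinian R (R ⧸ I) := isArtinian_of_linearEquiv (auxEquiv p N).symm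
      haveI h2 : IsArtinian (R ⧸ I) (R ⧸ I) := isArtinian_of_tower R h1
      haveI h3 : IsArtinianRing (R ⧸ I) := h2
      haveI := hq
      haveI : IsDomain (R ⧸ I) := inferInstance
      have hfield : IsField (R ⧸ I) :=
        (MulEquiv.ofBijective (algebraMap (R ⧸ I) (FractionRing (R ⧸ I)))
          ⟨IsFractionRing.injective _ _,
            IsArtinianRing.localization_surjective (nonZeroDivisors (R ⧸ I)) _⟩).isField
          (Field.toIsField (FractionRing (R ⧸ I)))
      have : I.IsMaximal := Ideal.Quotient.maximal_of_isField I hfield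
      exact IsLocalRing.eq_maximalIdeal this
    · rintro rfl
      set m := IsLocalRing.maximalIdeal R
      have hpm' : p ≤ m := IsLocalRing.le_maximalIdeal hp.ne_top
      refine ⟨hm.isPrime, Submodule.restrictScalars R (m.map (Ideal.Quotient.mk p)), ?_, ?_⟩
      · have hIm := comap_map_eq p hpm'
        haveI hsimple : IsSimpleModule R (R ⧸ m) :=
          (isSimpleModule_iff_isCoatom (m := (m : Submodule R R))).mpr hm.out
        have : IsArtinian R (R ⧸ m) := inferInstance
        have := isArtinian_of_linearEquiv (hIm ▸ auxEquiv p (Submodule.restrictScalars R (m.map (Ideal.Quotient.mk p))))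
        exact this
      · rw [ann_eq, comap_map_eq p hpm']
  refine ⟨hCoass, hAtt, ?_⟩
  rw [hCoass, hAtt]
  constructor
  · rintro q rfl
    exact ⟨hm.isPrime, IsLocalRing.le_maximalIdeal hp.ne_top⟩
  · intro hsub
    have : p ∈ ({IsLocalRing.maximalIdeal R} : Set (Ideal R)) := hsub ⟨hp, le_refl p⟩
    exact hpm this
end

section
/- Let (R, m) be a Noetherian local ring and M = ⊕_{i ∈ ℕ} R/m a countably infinite direct sum of copies of the residue field. Then Coass_R(M) = {m}, so mag_R(M) = 0, while Ndim_R(M) > 0. -/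
open CategoryTheory

universe u

/-- The magnitude of a module: `sup { dim R/p : p ∈ Coass_R M }`, with value `⊥ = -∞` for `M = 0`. -/
noncomputable def Module.mag (R : Type u) [CommRing R] (M : Type u) [AddCommGroup M]
    [Module R M] : WithBot ℕ∞ :=
  ⨆ p ∈ Module.Coass R M, ringKrullDim (R ⧸ p)

/-- `NdimLE R d M` means the Noetherian dimension of `M` is at most `d - 1`; so
`NdimLE R 0 M` means `M = 0`, and `NdimLE R (d+1) M` means every ascending chain of submodules
of `M` eventually has successive quotients of Noetherian dimension at most `d - 1`. -/
def NdimLE (R : Type u) [CommRing R] :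
    ℕ → (M : Type u) → [AddCommGroup M] → [Module R M] → Prop
  | 0, M, _, _ => Subsingleton M
  | d + 1, M, _, _ => ∀ c : ℕ →o Submodule R M, ∃ n₀ : ℕ, ∀ n > n₀,
      NdimLE R d (↥(c (n + 1)) ⧸ Submodule.comap (c (n + 1)).subtype (c n))

open Classical in
/-- The Noetherian dimension of `M`, as an element of `WithBot ℕ∞`:
`⊥ = -1` iff `M = 0`, and otherwise it is the least natural number `d` with `NdimLE R (d+1) M`
(and `⊤` if no such `d` exists). -/
noncomputable def Ndim (R : Type u) [CommRing R] (M : Type u) [AddCommGroup M]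
    [Module R M] : WithBot ℕ∞ :=
  if Subsingleton M then ⊥
  else sInf {e : WithBot ℕ∞ | ∃ d : ℕ, e = (d : ℕ∞) ∧ NdimLE R (d + 1) M}

section Aux

variable (R : Type u) [CommRing R] [IsLocalRing R]

open IsLocalRing

/-- The annihilator of the residue field is the maximal ideal. -/
lemma aux_ann : Module.annihilator R (R ⧸ maximalIdeal R) = maximalIdeal R := by
  ext r
  rw [Module.mem_annihilator]
  constructor
  · intro h
    have := h (Ideal.Quotient.mk _ 1)
    rw [show r • (Ideal.Quotient.mk (maximalIdeal R) 1) =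
      Ideal.Quotient.mk (maximalIdeal R) (r * 1) from rfl] at this
    rwa [mul_one, Ideal.Quotient.eq_zero_iff_mem] at this
  · intro hr x
    obtain ⟨y, rfl⟩ := Ideal.Quotient.mk_surjective x
    rw [show r • (Ideal.Quotient.mk (maximalIdeal R) y) =
      Ideal.Quotient.mk (maximalIdeal R) (r * y) from rfl, Ideal.Quotient.eq_zero_iff_mem]
    exact Ideal.mul_mem_right _ _ hr

/-- The residue field is Artinian as an `R`-module. -/
lemma aux_artinian : IsArtinian R (R ⧸ maximalIdeal R) := by
  have : IsSimpleModule R (R ⧸ maximalIdeal R) :=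
    isSimpleModule_iff_isCoatom.mpr (Ideal.isMaximal_def.mp (maximalIdeal.isMaximal R))
  infer_instance

lemma aux_smul_zero {r : R} (hr : r ∈ maximalIdeal R) (x : R ⧸ maximalIdeal R) : r • x = 0 :=
  Module.mem_annihilator.mp ((aux_ann R).symm ▸ hr) x

end Aux

/-- A countably infinite direct sum of copies of a nontrivial module has Noetherian
dimension at least 1: the chain of submodules supported on initial segments never
stabilizes even up to "dimension ≤ -1" (i.e. triviality) of successive quotients. -/
lemma aux_chain (R : Type u) [CommRing R] (k : Type u) [AddCommGroup k] [Module R k]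
    [Nontrivial k] : ¬ NdimLE R 1 (ℕ →₀ k) := by
  intro h
  obtain ⟨x, hx0⟩ := exists_ne (0 : k)
  obtain ⟨n₀, hn₀⟩ := h ⟨fun n => Finsupp.supported k R (Set.Iio n),
    fun a b hab => Finsupp.supported_mono (Set.Iio_subset_Iio hab)⟩
  set n := n₀ + 1 with hn
  have hsub := hn₀ n (Nat.lt_succ_self n₀)
  have hx1 : Finsupp.single n x ∈ Finsupp.supported k R (Set.Iio (n + 1)) := by
    rw [Finsupp.mem_supported]
    refine Set.Subset.trans (Finset.coe_subset.mpr Finsupp.support_single_subset) ?_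
    simp [Set.mem_Iio]
  have hx2 : Finsupp.single n x ∉ Finsupp.supported k R (Set.Iio n) := by
    intro hx
    have := (Finsupp.mem_supported' R _).mp hx n (by simp [Set.mem_Iio])
    rw [Finsupp.single_eq_same] at this
    exact hx0 this
  have heq := hsub.elim (Submodule.Quotient.mk ⟨Finsupp.single n x, hx1⟩) 0
  rw [Submodule.Quotient.mk_eq_zero] at heq
  exact hx2 heq

theorem mag_lt_ndim_example (R : Type u) [CommRing R] [IsNoetherianRing R] [IsLocalRing R] :
    Module.Coass R (ℕ →₀ (R ⧸ IsLocalRing.maximalIdeal R)) = {IsLocalRing.maximalIdeal R} ∧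
      Module.mag R (ℕ →₀ (R ⧸ IsLocalRing.maximalIdeal R)) = 0 ∧
      0 < Ndim R (ℕ →₀ (R ⧸ IsLocalRing.maximalIdeal R)) := by
  have hkart : IsArtinian R (R ⧸ IsLocalRing.maximalIdeal R) := aux_artinian R
  -- Part 1: Coass = {m}
  have hCoass : Module.Coass R (ℕ →₀ (R ⧸ IsLocalRing.maximalIdeal R)) =
      {IsLocalRing.maximalIdeal R} := by
    ext p
    simp only [Module.Coass, Set.mem_setOf_eq, Set.mem_singleton_iff]
    constructor
    · rintro ⟨hp, N, hart, rfl⟩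
      have hmle : IsLocalRing.maximalIdeal R ≤
          Module.annihilator R ((ℕ →₀ (R ⧸ IsLocalRing.maximalIdeal R)) ⧸ N) := by
        intro r hr
        rw [Module.mem_annihilator]
        intro xq
        obtain ⟨y, rfl⟩ := Submodule.Quotient.mk_surjective N xq
        rw [← Submodule.Quotient.mk_smul]
        convert Submodule.Quotient.mk_zero N using 2
        ext i
        exact aux_smul_zero R hr (y i)
      exact ((IsLocalRing.maximalIdeal.isMaximal R).eq_of_le hp.ne_top hmle).symm
    · rintro rfl
      refine ⟨(IsLocalRing.maximalIdeal.isMaximal R).isPrime, ?_⟩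
      set f : (ℕ →₀ (R ⧸ IsLocalRing.maximalIdeal R)) →ₗ[R] (R ⧸ IsLocalRing.maximalIdeal R) :=
        Finsupp.lapply 0 with hf'
      have hf : Function.Surjective f := fun x =>
        ⟨Finsupp.single 0 x, by simp [hf', Finsupp.lapply_apply]⟩
      set e := f.quotKerEquivOfSurjective hf
      refine ⟨LinearMap.ker f, e.symm.isArtinian_iff.mp hkart, ?_⟩
      rw [e.annihilator_eq, aux_ann R]
  refine ⟨hCoass, ?_, ?_⟩
  -- Part 2: mag = 0
  · haveI : (IsLocalRing.maximalIdeal R).IsMaximal := IsLocalRing.maximalIdeal.isMaximal R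
    rw [Module.mag, hCoass]
    simp only [Set.mem_singleton_iff, iSup_iSup_eq_left]
    exact ringKrullDim_eq_zero_of_isField
      ((Ideal.Quotient.maximal_ideal_iff_isField_quotient _).mp ‹_›)
  -- Part 3: 0 < Ndim
  · rw [Ndim, if_neg (not_subsingleton (ℕ →₀ (R ⧸ IsLocalRing.maximalIdeal R)))]
    refine lt_of_lt_of_le (by norm_num : (0 : WithBot ℕ∞) < 1) (le_sInf ?_)
    rintro e ⟨d, rfl, hd⟩
    rcases d with _ | d
    · exact absurd hd (aux_chain R (R ⧸ IsLocalRing.maximalIdeal R))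
    · exact_mod_cast Nat.one_le_iff_ne_zero.mpr (Nat.succ_ne_zero d)
end
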